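/- arXiv:2007.00561 — 3 statements merged into one kernel-verified Lean document; each statement's English description precedes it below -/
import Mathlib

section
/- Under the integrability, boundedness, and qualification assumptions (A1)-(A3), strong duality holds: the primal value V(0) = inf { E^P[ξ] : P ∈ 𝒫, E^P[ζ] ∈ {0_m} × ℝ_-^ℓ } equals the dual value D(0) = sup { d(λ) : λ ∈ ℝ^m × ℝ_+^ℓ }, where d(λ) = inf_{P ∈ 𝒫} ( E^P[ξ] + ⟨λ, E^P[ζ]⟩ ). -/
open MeasureTheory ProbabilityTheory Set

private lemma aux_int_comb {Ω : Type*} [MeasurableSpace Ω] (P Q : Measure Ω) (a b : ℝ)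
    (ha : 0 ≤ a) (hb : 0 ≤ b) (f : Ω → ℝ) (hfP : Integrable f P) (hfQ : Integrable f Q) :
    ∫ ω, f ω ∂(ENNReal.ofReal a • P + ENNReal.ofReal b • Q)
      = a * ∫ ω, f ω ∂P + b * ∫ ω, f ω ∂Q := by
  rw [integral_add_measure (hfP.smul_measure ENNReal.ofReal_ne_top)
      (hfQ.smul_measure ENNReal.ofReal_ne_top),
    integral_smul_measure, integral_smul_measure,
    ENNReal.toReal_ofReal ha, ENNReal.toReal_ofReal hb, smul_eq_mul, smul_eq_mul]

private lemma aux_small {A B C : ℝ} (h : ∀ t : ℝ, 0 < t → t ≤ 1 → A ≤ B + t * C) : A ≤ B := by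
  by_contra hc
  push_neg at hc
  rcases le_or_gt C 0 with hC | hC
  · have := h 1 one_pos le_rfl; nlinarith
  · have ht1 : 0 < (A - B) / (2 * C) := div_pos (by linarith) (by linarith)
    have h2 := h (min 1 ((A - B) / (2 * C))) (lt_min one_pos ht1) (min_le_left _ _)
    have h3 : min 1 ((A - B) / (2 * C)) * C ≤ (A - B) / 2 := by
      calc min 1 ((A - B) / (2 * C)) * C ≤ (A - B) / (2 * C) * C :=
            mul_le_mul_of_nonneg_right (min_le_right _ _) hC.le
        _ = (A - B) / 2 := by field_simp
    nlinarith

private lemma aux_nonpos {c K : ℝ} (h : ∀ t : ℝ, 0 ≤ t → t * c ≤ K) : c ≤ 0 := by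
  by_contra hc
  push_neg at hc
  have hK : 0 ≤ K := by simpa using h 0 le_rfl
  have h2 := h ((K + 1) / c) (by positivity)
  rw [div_mul_cancel₀] at h2
  · linarith
  · exact hc.ne'

private lemma aux_decomp {n : ℕ} (f : ((Fin n → ℝ) × ℝ) →L[ℝ] ℝ) (w : Fin n → ℝ) (r : ℝ) :
    f (w, r) = (∑ i, w i * f ((fun j => if i = j then (1:ℝ) else 0), 0))
      + r * f (0, 1) := by
  classical
  have h1 : ((w, r) : (Fin n → ℝ) × ℝ) = (w, 0) + (0, r) := by
    ext <;> simp
  have h2 : ((0, r) : (Fin n → ℝ) × ℝ) = r • ((0 : Fin n → ℝ), (1:ℝ)) := by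
    ext <;> simp
  have h3 : ((w, 0) : (Fin n → ℝ) × ℝ)
      = ∑ i, w i • (((fun j => if i = j then (1:ℝ) else 0) : Fin n → ℝ), (0:ℝ)) := by
    refine Prod.ext ?_ ?_
    · rw [Prod.fst_sum]
      simpa using pi_eq_sum_univ w
    · rw [Prod.snd_sum]
      simp
  rw [h1, map_add, h2, _root_.map_smul, h3, map_sum]
  simp only [_root_.map_smul, smul_eq_mul]

/-- strong duality. Under (A1) integrability, (A2) boundedness
`sup_{P∈Pc}|E^P[ξ]| ≤ M`, (A3) the qualification condition, and convexity of `Pc`,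
the primal value `V(0)` equals the dual value `D(0) = sup_{λ ∈ ℝ^m × ℝ_+^ℓ} d(λ)`. -/
theorem strong_duality
    {Ω : Type*} [MeasurableSpace Ω] (m l : ℕ)
    (Pc : Set (Measure Ω))
    (hprob : ∀ P ∈ Pc, IsProbabilityMeasure P)
    (hconv : ∀ P ∈ Pc, ∀ Q ∈ Pc, ∀ θ : ℝ, 0 ≤ θ → θ ≤ 1 →
      (ENNReal.ofReal θ) • P + (ENNReal.ofReal (1 - θ)) • Q ∈ Pc)
    (ξ : Ω → ℝ) (ζ : Fin (m + l) → Ω → ℝ)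
    (hξ : ∀ P ∈ Pc, Integrable ξ P)
    (hζ : ∀ P ∈ Pc, ∀ i, Integrable (ζ i) P)
    (M : ℝ) (hM : ∀ P ∈ Pc, |∫ ω, ξ ω ∂P| ≤ M)
    (ε : ℝ) (hε : 0 < ε)
    (hqual : ∀ z : Fin (m + l) → ℝ, ‖z‖ ≤ ε → ∃ P ∈ Pc, ∀ i : Fin (m + l),
        ((i : ℕ) < m → (∫ ω, ζ i ω ∂P) + z i = 0) ∧
        (m ≤ (i : ℕ) → (∫ ω, ζ i ω ∂P) + z i ≤ 0))
    (V : (Fin (m + l) → ℝ) → EReal)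
    (hV : ∀ z, V z = sInf ((fun P => ((∫ ω, ξ ω ∂P : ℝ) : EReal)) ''
      {P | P ∈ Pc ∧ ∀ i : Fin (m + l),
        ((i : ℕ) < m → (∫ ω, ζ i ω ∂P) + z i = 0) ∧
        (m ≤ (i : ℕ) → (∫ ω, ζ i ω ∂P) + z i ≤ 0)}))
    (d : (Fin (m + l) → ℝ) → EReal)
    (hd : ∀ lam : Fin (m + l) → ℝ,
      d lam = sInf ((fun P =>
        (((∫ ω, ξ ω ∂P) + ∑ i, lam i * (∫ ω, ζ i ω ∂P) : ℝ) : EReal)) '' Pc)) :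
    V 0 = sSup (d '' {lam : Fin (m + l) → ℝ | ∀ i : Fin (m + l), m ≤ (i : ℕ) → 0 ≤ lam i}) := by
  classical
  -- the constraint "set" S
  set S : Set ((Fin (m + l) → ℝ) × ℝ) := {p | ∃ P ∈ Pc,
    (∀ i : Fin (m + l), ((i : ℕ) < m → (∫ ω, ζ i ω ∂P) = p.1 i) ∧
      (m ≤ (i : ℕ) → (∫ ω, ζ i ω ∂P) ≤ p.1 i)) ∧ (∫ ω, ξ ω ∂P) ≤ p.2} with hS
  -- convexity of S
  have hSconv : Convex ℝ S := by
    rintro ⟨w1, r1⟩ ⟨P, hP, hPw, hPr⟩ ⟨w2, r2⟩ ⟨Q, hQ, hQw, hQr⟩ a b ha hb hab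
    refine ⟨ENNReal.ofReal a • P + ENNReal.ofReal b • Q, ?_, ?_, ?_⟩
    · have h := hconv P hP Q hQ a ha (by linarith)
      rwa [show (1 : ℝ) - a = b by linarith] at h
    · intro i
      have hint := aux_int_comb P Q a b ha hb (ζ i) (hζ P hP i) (hζ Q hQ i)
      constructor
      · intro him
        rw [hint, (hPw i).1 him, (hQw i).1 him]
        simp [Prod.smul_def]
      · intro him
        rw [hint]
        have h1 := mul_le_mul_of_nonneg_left ((hPw i).2 him) ha
        have h2 := mul_le_mul_of_nonneg_left ((hQw i).2 him) hb
        have : a * (∫ ω, ζ i ω ∂P) + b * (∫ ω, ζ i ω ∂Q) ≤ a * w1 i + b * w2 i := by linarith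
        simpa [Prod.smul_def] using this
    · have hint := aux_int_comb P Q a b ha hb ξ (hξ P hP) (hξ Q hQ)
      rw [hint]
      have h1 := mul_le_mul_of_nonneg_left hPr ha
      have h2 := mul_le_mul_of_nonneg_left hQr hb
      have : a * (∫ ω, ξ ω ∂P) + b * (∫ ω, ξ ω ∂Q) ≤ a * r1 + b * r2 := by linarith
      simpa [Prod.smul_def] using this
  -- qualification gives membership
  have hU : ∀ w : Fin (m + l) → ℝ, ‖w‖ ≤ ε → ∀ r : ℝ, M ≤ r → ((w, r) : (Fin (m + l) → ℝ) × ℝ) ∈ S := by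
    intro w hw r hr
    obtain ⟨P, hP, hPf⟩ := hqual (-w) (by rwa [norm_neg])
    refine ⟨P, hP, fun i => ⟨fun him => ?_, fun him => ?_⟩, ?_⟩
    · have := (hPf i).1 him
      simp only [Pi.neg_apply] at this
      linarith
    · have := (hPf i).2 him
      simp only [Pi.neg_apply] at this
      linarith
    · have := hM P hP
      calc (∫ ω, ξ ω ∂P) ≤ |∫ ω, ξ ω ∂P| := le_abs_self _
        _ ≤ M := this
        _ ≤ r := hr
  -- interior point
  have hy0 : (((0 : Fin (m + l) → ℝ), M + 1) : (Fin (m + l) → ℝ) × ℝ) ∈ interior S := by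
    have hUsub : (Metric.ball (0 : Fin (m + l) → ℝ) ε) ×ˢ (Ioi M) ⊆ S := by
      rintro ⟨w, r⟩ ⟨hw, hr⟩
      exact hU w (le_of_lt (by simpa using hw)) r (le_of_lt hr)
    have hopen : IsOpen ((Metric.ball (0 : Fin (m + l) → ℝ) ε) ×ˢ (Ioi M)) :=
      Metric.isOpen_ball.prod isOpen_Ioi
    exact interior_maximal hUsub hopen ⟨by simpa using hε, by simp⟩
  -- a feasible measure at 0
  have hfeas0 : ∃ P ∈ Pc, ∀ i : Fin (m + l), ((i : ℕ) < m → (∫ ω, ζ i ω ∂P) = 0) ∧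
      (m ≤ (i : ℕ) → (∫ ω, ζ i ω ∂P) ≤ 0) := by
    obtain ⟨P, hP, hPf⟩ := hqual 0 (by simpa using hε.le)
    exact ⟨P, hP, fun i => ⟨fun him => by simpa using (hPf i).1 him,
      fun him => by simpa using (hPf i).2 him⟩⟩
  obtain ⟨P0, hP0, hP0f⟩ := hfeas0
  have hP0mem : P0 ∈ {P | P ∈ Pc ∧ ∀ i : Fin (m + l),
      ((i : ℕ) < m → (∫ ω, ζ i ω ∂P) + (0 : Fin (m + l) → ℝ) i = 0) ∧
      (m ≤ (i : ℕ) → (∫ ω, ζ i ω ∂P) + (0 : Fin (m + l) → ℝ) i ≤ 0)} :=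
    ⟨hP0, fun i => ⟨fun him => by simpa using (hP0f i).1 him,
      fun him => by simpa using (hP0f i).2 him⟩⟩
  -- V 0 is a finite real
  have hub : V 0 ≤ ((M : ℝ) : EReal) := by
    rw [hV 0]
    refine le_trans (sInf_le ⟨P0, hP0mem, rfl⟩) ?_
    show ((∫ ω, ξ ω ∂P0 : ℝ) : EReal) ≤ ((M : ℝ) : EReal)
    exact EReal.coe_le_coe_iff.2 (abs_le.1 (hM P0 hP0)).2
  have hlb : ((-M : ℝ) : EReal) ≤ V 0 := by
    rw [hV 0]
    refine le_sInf ?_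
    rintro x ⟨P, ⟨hP, _⟩, rfl⟩
    show ((-M : ℝ) : EReal) ≤ ((∫ ω, ξ ω ∂P : ℝ) : EReal)
    exact EReal.coe_le_coe_iff.2 (abs_le.1 (hM P hP)).1
  have hVtop : V 0 ≠ ⊤ := ne_top_of_le_ne_top (EReal.coe_ne_top M) hub
  have hVbot : V 0 ≠ ⊥ := fun h => by simp [h] at hlb
  set v : ℝ := (V 0).toReal with hv
  have hVv : V 0 = ((v : ℝ) : EReal) := (EReal.coe_toReal hVtop hVbot).symm
  set A : Set (Fin (m + l) → ℝ) := {lam : Fin (m + l) → ℝ | ∀ i : Fin (m + l), m ≤ (i : ℕ) → 0 ≤ lam i} with hA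
  -- weak duality
  have hweak : sSup (d '' A) ≤ V 0 := by
    refine sSup_le ?_
    rintro y ⟨lam, hlam, rfl⟩
    rw [hd lam, hV 0]
    refine le_sInf ?_
    rintro x ⟨P, ⟨hP, hPf⟩, rfl⟩
    refine le_trans (sInf_le ⟨P, hP, rfl⟩) ?_
    have hsum : (∑ i, lam i * (∫ ω, ζ i ω ∂P)) ≤ 0 := by
      refine Finset.sum_nonpos fun i _ => ?_
      rcases lt_or_ge (i : ℕ) m with him | him
      · have := (hPf i).1 him
        simp only [Pi.zero_apply, add_zero] at this
        simp [this]
      · have h1 := (hPf i).2 him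
        simp only [Pi.zero_apply, add_zero] at h1
        exact mul_nonpos_of_nonneg_of_nonpos (hlam i him) h1
    show ((((∫ ω, ξ ω ∂P) + ∑ i, lam i * (∫ ω, ζ i ω ∂P)) : ℝ) : EReal)
      ≤ ((∫ ω, ξ ω ∂P : ℝ) : EReal)
    exact EReal.coe_le_coe_iff.2 (by linarith)
  -- strong duality: key claim
  have key : ∀ δ : ℝ, 0 < δ → ((v - δ : ℝ) : EReal) ≤ sSup (d '' A) := by
    intro δ hδ
    set x0 : (Fin (m + l) → ℝ) × ℝ := ((0 : Fin (m + l) → ℝ), v - δ) with hx0def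
    have hx0 : x0 ∉ S := by
      rintro ⟨P, hP, hPw, hPr⟩
      have hPfeas : P ∈ {P | P ∈ Pc ∧ ∀ i : Fin (m + l),
          ((i : ℕ) < m → (∫ ω, ζ i ω ∂P) + (0 : Fin (m + l) → ℝ) i = 0) ∧
          (m ≤ (i : ℕ) → (∫ ω, ζ i ω ∂P) + (0 : Fin (m + l) → ℝ) i ≤ 0)} := by
        refine ⟨hP, fun i => ⟨fun him => ?_, fun him => ?_⟩⟩
        · have := (hPw i).1 him; simpa [hx0def] using this
        · have := (hPw i).2 him; simpa [hx0def] using this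
      have h1 : V 0 ≤ ((∫ ω, ξ ω ∂P : ℝ) : EReal) := by
        rw [hV 0]; exact sInf_le ⟨P, hPfeas, rfl⟩
      rw [hVv] at h1
      have h2 : v ≤ (∫ ω, ξ ω ∂P) := by exact_mod_cast h1
      have h3 : (∫ ω, ξ ω ∂P) ≤ v - δ := hPr
      linarith
    obtain ⟨f, hf⟩ := geometric_hahn_banach_open_point hSconv.interior isOpen_interior
      (fun h => hx0 (interior_subset h))
    -- f ≤ f x0 on all of S
    have hfS : ∀ p ∈ S, f p ≤ f x0 := by
      intro p hp
      refine aux_small (C := f p - f ((0 : Fin (m + l) → ℝ), M + 1)) ?_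
      intro t ht0 ht1
      have hmem : (1 - t) • p + t • (((0 : Fin (m + l) → ℝ), M + 1) : (Fin (m + l) → ℝ) × ℝ)
          ∈ interior S :=
        hSconv.combo_self_interior_mem_interior hp hy0 (by linarith) ht0 (by ring)
      have := hf _ hmem
      rw [map_add, _root_.map_smul, _root_.map_smul, smul_eq_mul, smul_eq_mul] at this
      nlinarith
    set c : Fin (m + l) → ℝ := fun i => f ((fun j => if i = j then (1:ℝ) else 0), 0) with hc
    set μ : ℝ := f ((0 : Fin (m + l) → ℝ), 1) with hμdef
    have hdec : ∀ (w : Fin (m + l) → ℝ) (r : ℝ), f (w, r) = (∑ i, w i * c i) + r * μ :=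
      fun w r => aux_decomp f w r
    have hfx0 : f x0 = (v - δ) * μ := by
      rw [hx0def, hdec]; simp
    -- μ ≤ 0
    have hμ0 : μ ≤ 0 := by
      refine aux_nonpos (K := (v - δ) * μ - (M + 1) * μ) ?_
      intro t ht
      have hmem := hU 0 (by simpa using hε.le) (M + 1 + t) (by linarith)
      have := hfS _ hmem
      rw [hdec, hfx0] at this
      simp only [Pi.zero_apply, zero_mul, Finset.sum_const_zero, zero_add] at this
      nlinarith
    -- μ ≠ 0
    have hμne : μ ≠ 0 := by
      intro h0
      have := hf _ hy0
      rw [hdec, hfx0, h0] at this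
      simp at this
    have hμ : μ < 0 := lt_of_le_of_ne hμ0 hμne
    -- c i ≤ 0 for i ≥ m
    have hci : ∀ i : Fin (m + l), m ≤ (i : ℕ) → c i ≤ 0 := by
      intro i him
      refine aux_nonpos (K := (v - δ) * μ - (M + 1) * μ) ?_
      intro t ht
      have hmem : ((fun j => if i = j then t else 0, M + 1) : (Fin (m + l) → ℝ) × ℝ) ∈ S := by
        refine ⟨P0, hP0, fun j => ⟨fun hjm => ?_, fun hjm => ?_⟩, ?_⟩
        · have hne : i ≠ j := by
            intro h; rw [h] at him; omega
          simp only [hne, if_false]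
          exact (hP0f j).1 hjm
        · rcases eq_or_ne i j with h | h
          · simp only [h, if_pos rfl]
            exact le_trans ((hP0f j).2 hjm) ht
          · simp only [h, if_false]
            exact (hP0f j).2 hjm
        · calc (∫ ω, ξ ω ∂P0) ≤ |∫ ω, ξ ω ∂P0| := le_abs_self _
            _ ≤ M := hM P0 hP0
            _ ≤ M + 1 := by linarith
      have := hfS _ hmem
      rw [hdec, hfx0] at this
      have hsum : (∑ j, (if i = j then t else 0) * c j) = t * c i := by
        rw [Finset.sum_eq_single i]
        · simp
        · intro j _ hji
          simp [Ne.symm hji]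
        · simp
      rw [hsum] at this
      linarith
    -- the dual multiplier
    set lam : Fin (m + l) → ℝ := fun i => c i / μ with hlamdef
    have hlamA : lam ∈ A := by
      intro i him
      have h1 : 0 ≤ (-(c i)) / (-μ) := div_nonneg (by linarith [hci i him]) (by linarith)
      rwa [neg_div_neg_eq] at h1
    have hkey : ∀ P ∈ Pc, v - δ ≤ (∫ ω, ξ ω ∂P) + ∑ i, lam i * (∫ ω, ζ i ω ∂P) := by
      intro P hP
      have hmem : ((fun i => ∫ ω, ζ i ω ∂P, ∫ ω, ξ ω ∂P) : (Fin (m + l) → ℝ) × ℝ) ∈ S :=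
        ⟨P, hP, fun i => ⟨fun _ => rfl, fun _ => le_rfl⟩, le_rfl⟩
      have hineq := hfS _ hmem
      rw [hdec, hfx0] at hineq
      have hmul : μ * ((∫ ω, ξ ω ∂P) + ∑ i, lam i * (∫ ω, ζ i ω ∂P))
          = (∑ i, (∫ ω, ζ i ω ∂P) * c i) + (∫ ω, ξ ω ∂P) * μ := by
        have hterm : ∀ i : Fin (m + l), μ * (lam i * (∫ ω, ζ i ω ∂P))
            = (∫ ω, ζ i ω ∂P) * c i := by
          intro i
          simp only [hlamdef]
          field_simp
        rw [mul_add, Finset.mul_sum, Finset.sum_congr rfl fun i _ => hterm i]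
        ring
      have h2 : μ * ((∫ ω, ξ ω ∂P) + ∑ i, lam i * (∫ ω, ζ i ω ∂P)) ≤ μ * (v - δ) := by
        rw [hmul]; linarith
      exact ((mul_le_mul_left_of_neg hμ).1 h2)
    have hdlam : ((v - δ : ℝ) : EReal) ≤ d lam := by
      rw [hd lam]
      refine le_sInf ?_
      rintro x ⟨P, hP, rfl⟩
      show ((v - δ : ℝ) : EReal)
        ≤ ((((∫ ω, ξ ω ∂P) + ∑ i, lam i * (∫ ω, ζ i ω ∂P)) : ℝ) : EReal)
      exact EReal.coe_le_coe_iff.2 (hkey P hP)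
    exact le_trans hdlam (le_sSup ⟨lam, hlamA, rfl⟩)
  -- conclude
  have hstrong : V 0 ≤ sSup (d '' A) := by
    rw [hVv]
    by_contra hcon
    push_neg at hcon
    obtain ⟨r, hr1, hr2⟩ := EReal.exists_between_coe_real hcon
    have hr2' : r < v := by exact_mod_cast hr2
    have := key (v - r) (by linarith)
    rw [show v - (v - r) = r by ring] at this
    exact absurd this (not_le.2 hr1)
  exact le_antisymm hstrong hweak
end

section
/- Under assumptions (A1)-(A3), the set of solutions to the dual problem sup_{λ ∈ ℝ^m × ℝ_+^ℓ} d(λ) is non-empty, coincides with the subdifferential ∂V(0), and every dual optimizer λ* satisfies the a priori bound ‖λ*‖_1 = Σ_i |λ*_i| ≤ 2M/ε. -/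
open MeasureTheory ProbabilityTheory Set

set_option maxHeartbeats 2000000 in
/-- under (A1)-(A3) the set of dual solutions is non-empty, coincides
with the subdifferential `∂V(0)`, and every dual optimizer `λ*` satisfies
`‖λ*‖₁ ≤ 2M/ε`. -/
theorem dual_solutions_nonempty_eq_subdiff_bounded
    {Ω : Type*} [MeasurableSpace Ω] (m l : ℕ)
    (Pc : Set (Measure Ω))
    (hprob : ∀ P ∈ Pc, IsProbabilityMeasure P)
    (hconv : ∀ P ∈ Pc, ∀ Q ∈ Pc, ∀ θ : ℝ, 0 ≤ θ → θ ≤ 1 →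
      (ENNReal.ofReal θ) • P + (ENNReal.ofReal (1 - θ)) • Q ∈ Pc)
    (ξ : Ω → ℝ) (ζ : Fin (m + l) → Ω → ℝ)
    (hξ : ∀ P ∈ Pc, Integrable ξ P)
    (hζ : ∀ P ∈ Pc, ∀ i, Integrable (ζ i) P)
    (M : ℝ) (hM : ∀ P ∈ Pc, |∫ ω, ξ ω ∂P| ≤ M)
    (ε : ℝ) (hε : 0 < ε)
    (hqual : ∀ z : Fin (m + l) → ℝ, ‖z‖ ≤ ε → ∃ P ∈ Pc, ∀ i : Fin (m + l),
        ((i : ℕ) < m → (∫ ω, ζ i ω ∂P) + z i = 0) ∧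
        (m ≤ (i : ℕ) → (∫ ω, ζ i ω ∂P) + z i ≤ 0))
    (V : (Fin (m + l) → ℝ) → EReal)
    (hV : ∀ z, V z = sInf ((fun P => ((∫ ω, ξ ω ∂P : ℝ) : EReal)) ''
      {P | P ∈ Pc ∧ ∀ i : Fin (m + l),
        ((i : ℕ) < m → (∫ ω, ζ i ω ∂P) + z i = 0) ∧
        (m ≤ (i : ℕ) → (∫ ω, ζ i ω ∂P) + z i ≤ 0)}))
    (d : (Fin (m + l) → ℝ) → EReal)
    (hd : ∀ lam : Fin (m + l) → ℝ,
      d lam = sInf ((fun P =>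
        (((∫ ω, ξ ω ∂P) + ∑ i, lam i * (∫ ω, ζ i ω ∂P) : ℝ) : EReal)) '' Pc))
    -- the set of solutions to the dual problem `sup_{λ ∈ ℝ^m × ℝ_+^ℓ} d(λ)`
    (DualSol : Set (Fin (m + l) → ℝ))
    (hDualSol : ∀ lam, lam ∈ DualSol ↔
      ((∀ i : Fin (m + l), m ≤ (i : ℕ) → 0 ≤ lam i) ∧
        ∀ lam' : Fin (m + l) → ℝ, (∀ i : Fin (m + l), m ≤ (i : ℕ) → 0 ≤ lam' i) →
          d lam' ≤ d lam)) :
    DualSol.Nonempty ∧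
    (∀ lam : Fin (m + l) → ℝ, lam ∈ DualSol ↔
      (∀ z : Fin (m + l) → ℝ, V 0 + ((∑ i, lam i * z i : ℝ) : EReal) ≤ V z)) ∧
    (∀ lam ∈ DualSol, ∑ i, |lam i| ≤ 2 * M / ε) := by
  classical
  -- `V z ≤ E^P[ξ]` for every feasible `P`
  have hVle : ∀ (z : Fin (m + l) → ℝ) (P : Measure Ω), P ∈ Pc →
      (∀ i : Fin (m + l), ((i : ℕ) < m → (∫ ω, ζ i ω ∂P) + z i = 0) ∧
        (m ≤ (i : ℕ) → (∫ ω, ζ i ω ∂P) + z i ≤ 0)) →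
      V z ≤ ((∫ ω, ξ ω ∂P : ℝ) : EReal) := by
    intro z P hPc hfeas
    rw [hV]
    exact sInf_le ⟨P, ⟨hPc, hfeas⟩, rfl⟩
  have hnorm0 : ‖(0 : Fin (m + l) → ℝ)‖ ≤ ε := by simpa using hε.le
  have hM0 : 0 ≤ M := by
    obtain ⟨P, hPc, -⟩ := hqual 0 hnorm0
    exact le_trans (abs_nonneg _) (hM P hPc)
  have hVlb : ∀ z : Fin (m + l) → ℝ, ((-M : ℝ) : EReal) ≤ V z := by
    intro z
    rw [hV]
    refine le_sInf ?_
    rintro x ⟨P, hP, rfl⟩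
    exact EReal.coe_le_coe_iff.mpr (neg_le_of_abs_le (hM P hP.1))
  have hVub : ∀ z : Fin (m + l) → ℝ, ‖z‖ ≤ ε → V z ≤ ((M : ℝ) : EReal) := by
    intro z hz
    obtain ⟨P, hPc, hfeas⟩ := hqual z hz
    exact le_trans (hVle z P hPc hfeas) (EReal.coe_le_coe_iff.mpr (le_of_abs_le (hM P hPc)))
  have hV0ub : V 0 ≤ ((M : ℝ) : EReal) := hVub 0 hnorm0
  have hV0top : V 0 ≠ ⊤ := ne_top_of_le_ne_top (EReal.coe_ne_top M) hV0ub
  have hV0bot : V 0 ≠ ⊥ := by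
    intro h
    have := hVlb 0
    rw [h, le_bot_iff] at this
    exact EReal.coe_ne_bot _ this
  set v0 : ℝ := (V 0).toReal with hv0def
  have hv0 : ((v0 : ℝ) : EReal) = V 0 := EReal.coe_toReal hV0top hV0bot
  have hv0ub : v0 ≤ M := EReal.coe_le_coe_iff.mp (by rw [hv0]; exact hV0ub)
  have hv0lb : -M ≤ v0 := EReal.coe_le_coe_iff.mp (by rw [hv0]; exact hVlb 0)
  -- every subgradient has the right signs
  have hsign : ∀ lam : Fin (m + l) → ℝ,
      (∀ z : Fin (m + l) → ℝ, V 0 + ((∑ i, lam i * z i : ℝ) : EReal) ≤ V z) →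
      ∀ i : Fin (m + l), m ≤ (i : ℕ) → 0 ≤ lam i := by
    intro lam hSG i hi
    set z : Fin (m + l) → ℝ := fun j => if j = i then (-1 : ℝ) else 0 with hz
    have hVz : V z ≤ V 0 := by
      rw [hV z, hV 0]
      refine le_sInf ?_
      rintro x ⟨P, ⟨hPc, hfeas⟩, rfl⟩
      refine sInf_le ⟨P, ⟨hPc, ?_⟩, rfl⟩
      intro j
      constructor
      · intro hj
        have hji : j ≠ i := by
          intro h; subst h; omega
        have h1 := (hfeas j).1 hj
        simp only [Pi.zero_apply, add_zero] at h1
        simp [hz, hji, h1]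
      · intro hj
        have h1 := (hfeas j).2 hj
        simp only [Pi.zero_apply, add_zero] at h1
        by_cases hji : j = i
        · subst hji
          simp only [hz, if_pos rfl]
          linarith
        · simp [hz, hji, h1]
    have h2 := (hSG z).trans hVz
    have hsum : (∑ j, lam j * z j) = -lam i := by
      rw [Finset.sum_eq_single i]
      · simp [hz]
      · intro b _ hb; simp [hz, hb]
      · intro h; exact absurd (Finset.mem_univ i) h
    rw [hsum, ← hv0, ← EReal.coe_add] at h2
    have h3 := EReal.coe_le_coe_iff.mp h2
    linarith
  -- weak duality
  have hweak : ∀ lam' : Fin (m + l) → ℝ, (∀ i : Fin (m + l), m ≤ (i : ℕ) → 0 ≤ lam' i) →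
      d lam' ≤ V 0 := by
    intro lam' hsgn
    rw [hd, hV]
    refine le_sInf ?_
    rintro x ⟨P, ⟨hPc, hfeas⟩, rfl⟩
    refine le_trans (sInf_le ⟨P, hPc, rfl⟩) (EReal.coe_le_coe_iff.mpr ?_)
    have hsum : (∑ i, lam' i * (∫ ω, ζ i ω ∂P)) ≤ 0 := by
      refine Finset.sum_nonpos fun i _ => ?_
      rcases lt_or_ge (i : ℕ) m with h | h
      · have h1 := (hfeas i).1 h
        simp only [Pi.zero_apply, add_zero] at h1
        simp [h1]
      · have h1 := (hfeas i).2 h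
        simp only [Pi.zero_apply, add_zero] at h1
        have := mul_le_mul_of_nonneg_left h1 (hsgn i h)
        simpa using this
    linarith
  -- subgradient implies `V 0 ≤ d lam`
  have hstrong : ∀ lam : Fin (m + l) → ℝ,
      (∀ z : Fin (m + l) → ℝ, V 0 + ((∑ i, lam i * z i : ℝ) : EReal) ≤ V z) →
      V 0 ≤ d lam := by
    intro lam hSG
    rw [hd]
    refine le_sInf ?_
    rintro x ⟨P, hPc, rfl⟩
    set z : Fin (m + l) → ℝ := fun i => -(∫ ω, ζ i ω ∂P) with hzdef
    have hfeas : ∀ i : Fin (m + l), ((i : ℕ) < m → (∫ ω, ζ i ω ∂P) + z i = 0) ∧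
        (m ≤ (i : ℕ) → (∫ ω, ζ i ω ∂P) + z i ≤ 0) := by
      intro i
      exact ⟨fun _ => by simp [hzdef], fun _ => le_of_eq (by simp [hzdef])⟩
    have h1 := (hSG z).trans (hVle z P hPc hfeas)
    rw [← hv0, ← EReal.coe_add] at h1
    have h2 := EReal.coe_le_coe_iff.mp h1
    have h3 : (∑ i, lam i * z i) = -∑ i, lam i * (∫ ω, ζ i ω ∂P) := by
      simp [hzdef, mul_neg]
    rw [← hv0]
    refine EReal.coe_le_coe_iff.mpr ?_
    rw [h3] at h2
    linarith
  -- the epigraph of `V` is convex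
  set Epi : Set ((Fin (m + l) → ℝ) × ℝ) := {p | V p.1 ≤ ((p.2 : ℝ) : EReal)} with hEpidef
  have hEpiConv : Convex ℝ Epi := by
    rintro ⟨z, t⟩ hzt ⟨z', t'⟩ hzt' a b ha hb hab
    simp only [hEpidef, mem_setOf_eq] at hzt hzt'
    have hgoal : (a • (z, t) + b • (z', t') : (Fin (m + l) → ℝ) × ℝ)
        = (a • z + b • z', a * t + b * t') := by
      simp [Prod.ext_iff, smul_eq_mul]
    rw [hEpidef]
    simp only [hgoal, mem_setOf_eq]
    have hb' : b = 1 - a := by linarith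
    have key : ∀ δ : ℝ, 0 < δ →
        V (a • z + b • z') ≤ ((a * t + b * t' + δ : ℝ) : EReal) := by
      intro δ hδ
      have h1 : V z < ((t + δ : ℝ) : EReal) :=
        lt_of_le_of_lt hzt (EReal.coe_lt_coe_iff.mpr (by linarith))
      have h1' : V z' < ((t' + δ : ℝ) : EReal) :=
        lt_of_le_of_lt hzt' (EReal.coe_lt_coe_iff.mpr (by linarith))
      rw [hV z] at h1
      rw [hV z'] at h1'
      obtain ⟨x, hx, hxlt⟩ := sInf_lt_iff.mp h1
      obtain ⟨P, ⟨hPc, hPfeas⟩, rfl⟩ := hx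
      obtain ⟨y, hy, hylt⟩ := sInf_lt_iff.mp h1'
      obtain ⟨Q, ⟨hQc, hQfeas⟩, rfl⟩ := hy
      have hPlt : (∫ ω, ξ ω ∂P) < t + δ := EReal.coe_lt_coe_iff.mp hxlt
      have hQlt : (∫ ω, ξ ω ∂Q) < t' + δ := EReal.coe_lt_coe_iff.mp hylt
      set R : Measure Ω := (ENNReal.ofReal a) • P + (ENNReal.ofReal (1 - a)) • Q with hRdef
      have hRmem : R ∈ Pc := hconv P hPc Q hQc a ha (by linarith)
      have hint : ∀ f : Ω → ℝ, Integrable f P → Integrable f Q →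
          ∫ ω, f ω ∂ R = a * ∫ ω, f ω ∂P + b * ∫ ω, f ω ∂Q := by
        intro f hfP hfQ
        rw [hRdef, integral_add_measure (hfP.smul_measure ENNReal.ofReal_ne_top)
          (hfQ.smul_measure ENNReal.ofReal_ne_top), integral_smul_measure,
          integral_smul_measure, ENNReal.toReal_ofReal ha,
          ENNReal.toReal_ofReal (by linarith : (0:ℝ) ≤ 1 - a), smul_eq_mul, smul_eq_mul, hb']
      have hRfeas : ∀ i : Fin (m + l),
          ((i : ℕ) < m → (∫ ω, ζ i ω ∂ R) + (a • z + b • z') i = 0) ∧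
          (m ≤ (i : ℕ) → (∫ ω, ζ i ω ∂ R) + (a • z + b • z') i ≤ 0) := by
        intro i
        have hζR := hint (ζ i) (hζ P hPc i) (hζ Q hQc i)
        have hzi : (a • z + b • z') i = a * z i + b * z' i := by
          simp [smul_eq_mul]
        constructor
        · intro hi
          have e1 := (hPfeas i).1 hi
          have e2 := (hQfeas i).1 hi
          rw [hζR, hzi]
          linear_combination a * e1 + b * e2
        · intro hi
          have e1 := (hPfeas i).2 hi
          have e2 := (hQfeas i).2 hi
          rw [hζR, hzi]
          have l1 := mul_le_mul_of_nonneg_left e1 ha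
          have l2 := mul_le_mul_of_nonneg_left e2 hb
          nlinarith
      refine le_trans (hVle _ R hRmem hRfeas) (EReal.coe_le_coe_iff.mpr ?_)
      rw [hint ξ (hξ P hPc) (hξ Q hQc)]
      have l1 := mul_le_mul_of_nonneg_left hPlt.le ha
      have l2 := mul_le_mul_of_nonneg_left hQlt.le hb
      have e : a * (t + δ) + b * (t' + δ) = a * t + b * t' + δ := by
        rw [hb']; ring
      linarith
    have hwtop : V (a • z + b • z') ≠ ⊤ :=
      ne_top_of_le_ne_top (EReal.coe_ne_top _) (key 1 one_pos)
    have hwbot : V (a • z + b • z') ≠ ⊥ := by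
      intro h
      have := hVlb (a • z + b • z')
      rw [h, le_bot_iff] at this
      exact EReal.coe_ne_bot _ this
    have hw := EReal.coe_toReal hwtop hwbot
    rw [← hw]
    refine EReal.coe_le_coe_iff.mpr (le_of_forall_pos_le_add fun δ hδ => ?_)
    have h := key δ hδ
    rw [← hw] at h
    exact EReal.coe_le_coe_iff.mp h
  -- interior points of the epigraph
  have hop : IsOpen {p : (Fin (m + l) → ℝ) × ℝ | ‖p.1‖ < ε ∧ M < p.2} := by
    have h1 : IsOpen {p : (Fin (m + l) → ℝ) × ℝ | ‖p.1‖ < ε} :=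
      isOpen_lt (continuous_fst.norm) continuous_const
    have h2 : IsOpen {p : (Fin (m + l) → ℝ) × ℝ | M < p.2} :=
      isOpen_lt continuous_const continuous_snd
    exact h1.inter h2
  have hsub : {p : (Fin (m + l) → ℝ) × ℝ | ‖p.1‖ < ε ∧ M < p.2} ⊆ Epi := by
    rintro ⟨z, s⟩ ⟨h1, h2⟩
    rw [hEpidef]
    exact le_trans (hVub z h1.le) (EReal.coe_le_coe_iff.mpr h2.le)
  have hu : ((0 : Fin (m + l) → ℝ), M + 1) ∈ interior Epi := by
    refine mem_interior.mpr ⟨_, hsub, hop, ?_⟩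
    constructor
    · simpa using hε
    · simp
  have hx0 : ((0 : Fin (m + l) → ℝ), v0) ∉ interior Epi := by
    intro h
    obtain ⟨δ, hδ, hball⟩ := Metric.mem_nhds_iff.mp (mem_interior_iff_mem_nhds.mp h)
    have hmem : ((0 : Fin (m + l) → ℝ), v0 - δ / 2) ∈
        Metric.ball ((0 : Fin (m + l) → ℝ), v0) δ := by
      rw [Metric.mem_ball, Prod.dist_eq]
      rw [max_lt_iff]
      constructor
      · simpa using hδ
      · rw [Real.dist_eq]
        rw [show v0 - δ / 2 - v0 = -(δ/2) by ring, abs_neg, abs_of_nonneg (by linarith)]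
        linarith
    have h2 := hball hmem
    rw [hEpidef] at h2
    simp only [mem_setOf_eq] at h2
    rw [← hv0] at h2
    have := EReal.coe_le_coe_iff.mp h2
    linarith
  obtain ⟨f, hf⟩ := geometric_hahn_banach_open_point (hEpiConv.interior) isOpen_interior hx0
  set c : ℝ := f ((0 : Fin (m + l) → ℝ), (1 : ℝ)) with hcdef
  have hf00 : f ((0 : Fin (m + l) → ℝ), (0 : ℝ)) = 0 := by
    have : ((0 : Fin (m + l) → ℝ), (0 : ℝ)) = (0 : (Fin (m + l) → ℝ) × ℝ) := rfl
    rw [this, map_zero]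
  have hfdecomp : ∀ (z : Fin (m + l) → ℝ) (t : ℝ), f (z, t) = f (z, 0) + t * c := by
    intro z t
    have h : (z, t) = ((z, (0 : ℝ)) : (Fin (m + l) → ℝ) × ℝ)
        + t • (((0 : Fin (m + l) → ℝ), (1 : ℝ)) : (Fin (m + l) → ℝ) × ℝ) := by
      simp [Prod.ext_iff]
    rw [h, map_add, _root_.map_smul, smul_eq_mul, hcdef]
  have hfx0 : f ((0 : Fin (m + l) → ℝ), v0) = v0 * c := by
    rw [hfdecomp, hf00, zero_add]
  have hfu : f ((0 : Fin (m + l) → ℝ), M + 1) = (M + 1) * c := by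
    rw [hfdecomp, hf00, zero_add]
  -- the separation inequality extends to the whole epigraph
  have hkey : ∀ p ∈ Epi, f p ≤ f ((0 : Fin (m + l) → ℝ), v0) := by
    intro p hp
    by_contra hcon
    push_neg at hcon
    have hstep : ∀ θ : ℝ, 0 < θ → θ ≤ 1 →
        f p - f ((0 : Fin (m + l) → ℝ), v0) < θ * (f p - f ((0 : Fin (m + l) → ℝ), M + 1)) := by
      intro θ hθ hθ1
      have hmem := hEpiConv.combo_interior_self_mem_interior hu hp hθ
        (by linarith : (0:ℝ) ≤ 1 - θ) (by ring)
      have h := hf _ hmem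
      rw [map_add, _root_.map_smul, _root_.map_smul, smul_eq_mul, smul_eq_mul] at h
      nlinarith
    set D : ℝ := f p - f ((0 : Fin (m + l) → ℝ), M + 1) with hD
    rcases le_or_gt D 0 with hD0 | hD0
    · have h1 := hstep 1 one_pos le_rfl
      nlinarith
    · set θ₀ : ℝ := min 1 ((f p - f ((0 : Fin (m + l) → ℝ), v0)) / (2 * D)) with hθ₀
      have hθpos : 0 < θ₀ :=
        lt_min one_pos (div_pos (by linarith) (by linarith))
      have h1 := hstep θ₀ hθpos (min_le_left _ _)
      have h2 : θ₀ * D ≤ ((f p - f ((0 : Fin (m + l) → ℝ), v0)) / (2 * D)) * D :=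
        mul_le_mul_of_nonneg_right (min_le_right _ _) hD0.le
      have h3 : ((f p - f ((0 : Fin (m + l) → ℝ), v0)) / (2 * D)) * D
          = (f p - f ((0 : Fin (m + l) → ℝ), v0)) / 2 := by
        field_simp
      rw [h3] at h2
      nlinarith [h1, h2, hcon]
  -- `c < 0`
  have hcle : c ≤ 0 := by
    have hmem : (((0 : Fin (m + l) → ℝ), v0 + 1) : (Fin (m + l) → ℝ) × ℝ) ∈ Epi := by
      rw [hEpidef]
      show V 0 ≤ ((v0 + 1 : ℝ) : EReal)
      rw [← hv0]
      exact EReal.coe_le_coe_iff.mpr (by linarith)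
    have h := hkey _ hmem
    rw [hfdecomp, hf00, zero_add, hfx0] at h
    nlinarith
  have hcne : c ≠ 0 := by
    intro h0
    have h := hf _ hu
    rw [hfu, hfx0, h0] at h
    simp at h
  have hclt : c < 0 := lt_of_le_of_ne hcle hcne
  -- a linear functional on the first coordinate
  set L : (Fin (m + l) → ℝ) →L[ℝ] ℝ :=
    f.comp (ContinuousLinearMap.inl ℝ (Fin (m + l) → ℝ) ℝ) with hLdef
  have hLapp : ∀ z : Fin (m + l) → ℝ, L z = f (z, 0) := by
    intro z
    simp [hLdef, ContinuousLinearMap.inl_apply]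
  have hφsum : ∀ z : Fin (m + l) → ℝ,
      f (z, 0) = ∑ i, z i * f ((fun j => if i = j then (1 : ℝ) else 0), 0) := by
    intro z
    rw [← hLapp]
    conv_lhs => rw [pi_eq_sum_univ z]
    rw [map_sum]
    refine Finset.sum_congr rfl fun i _ => ?_
    rw [_root_.map_smul, smul_eq_mul, hLapp]
  -- the candidate dual solution
  set lam0 : Fin (m + l) → ℝ :=
    fun i => f ((fun j => if i = j then (1 : ℝ) else 0), 0) / (-c) with hlam0
  have hSG0 : ∀ z : Fin (m + l) → ℝ, V 0 + ((∑ i, lam0 i * z i : ℝ) : EReal) ≤ V z := by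
    intro z
    rw [hV z]
    refine le_sInf ?_
    rintro x ⟨P, ⟨hPc, hPfeas⟩, rfl⟩
    have hmem : ((z, ∫ ω, ξ ω ∂P) : (Fin (m + l) → ℝ) × ℝ) ∈ Epi := by
      rw [hEpidef]
      exact hVle z P hPc hPfeas
    have h := hkey _ hmem
    rw [hfdecomp, hfx0] at h
    have hsum : (∑ i, lam0 i * z i) = f (z, 0) / (-c) := by
      rw [hφsum z, Finset.sum_div]
      refine Finset.sum_congr rfl fun i _ => ?_
      rw [hlam0]
      ring
    rw [← hv0, ← EReal.coe_add, hsum]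
    refine EReal.coe_le_coe_iff.mpr ?_
    have hc' : (0 : ℝ) < -c := by linarith
    rw [← mul_le_mul_iff_of_pos_right hc']
    have e : (v0 + f (z, 0) / (-c)) * (-c) = v0 * (-c) + f (z, 0) := by
      field_simp
      ring
    rw [e]
    nlinarith
  -- subgradient ⇒ dual solution
  have hSGtoD : ∀ lam : Fin (m + l) → ℝ,
      (∀ z : Fin (m + l) → ℝ, V 0 + ((∑ i, lam i * z i : ℝ) : EReal) ≤ V z) →
      lam ∈ DualSol := by
    intro lam hSG
    exact (hDualSol lam).mpr ⟨hsign lam hSG,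
      fun lam' hl' => le_trans (hweak lam' hl') (hstrong lam hSG)⟩
  -- dual solution ⇒ subgradient
  have hDtoSG : ∀ lam ∈ DualSol,
      ∀ z : Fin (m + l) → ℝ, V 0 + ((∑ i, lam i * z i : ℝ) : EReal) ≤ V z := by
    intro lam hlam z
    obtain ⟨hlsgn, hlmax⟩ := (hDualSol lam).mp hlam
    have hd0 : V 0 ≤ d lam :=
      le_trans (hstrong lam0 hSG0) (hlmax lam0 (hsign lam0 hSG0))
    rw [hV z]
    refine le_sInf ?_
    rintro x ⟨P, ⟨hPc, hPfeas⟩, rfl⟩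
    have h1 : d lam ≤ (((∫ ω, ξ ω ∂P) + ∑ i, lam i * (∫ ω, ζ i ω ∂P) : ℝ) : EReal) := by
      rw [hd]
      exact sInf_le ⟨P, hPc, rfl⟩
    have h2 : (∑ i, lam i * (∫ ω, ζ i ω ∂P)) ≤ ∑ i, lam i * (-(z i)) := by
      refine Finset.sum_le_sum fun i _ => ?_
      rcases lt_or_ge (i : ℕ) m with h | h
      · have h3 := (hPfeas i).1 h
        have h4 : (∫ ω, ζ i ω ∂P) = -(z i) := by linarith
        rw [h4]
      · have h3 := (hPfeas i).2 h
        exact mul_le_mul_of_nonneg_left (by linarith) (hlsgn i h)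
    have h4 := le_trans hd0 h1
    rw [← hv0] at h4
    have h5 := EReal.coe_le_coe_iff.mp h4
    rw [← hv0, ← EReal.coe_add]
    refine EReal.coe_le_coe_iff.mpr ?_
    have h6 : (∑ i, lam i * (-(z i))) = -∑ i, lam i * z i := by
      simp [mul_neg]
    rw [h6] at h2
    linarith
  -- the a priori bound
  have hbound : ∀ lam : Fin (m + l) → ℝ,
      (∀ z : Fin (m + l) → ℝ, V 0 + ((∑ i, lam i * z i : ℝ) : EReal) ≤ V z) →
      ∑ i, |lam i| ≤ 2 * M / ε := by
    intro lam hSG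
    set z : Fin (m + l) → ℝ := fun i => if 0 ≤ lam i then ε else -ε with hzdef
    have hznorm : ‖z‖ ≤ ε := by
      refine (pi_norm_le_iff_of_nonneg hε.le).mpr fun i => ?_
      rw [hzdef]
      dsimp only
      rw [Real.norm_eq_abs]
      split
      · rw [abs_of_nonneg hε.le]
      · rw [abs_neg, abs_of_nonneg hε.le]
    have hsum : (∑ i, lam i * z i) = ε * ∑ i, |lam i| := by
      rw [Finset.mul_sum]
      refine Finset.sum_congr rfl fun i _ => ?_
      rw [hzdef]
      dsimp only
      split
      · next h => rw [abs_of_nonneg h]; ring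
      · next h => rw [abs_of_neg (lt_of_not_ge h)]; ring
    have h1 := (hSG z).trans (hVub z hznorm)
    rw [← hv0, ← EReal.coe_add, hsum] at h1
    have h2 := EReal.coe_le_coe_iff.mp h1
    rw [le_div_iff₀ hε]
    nlinarith
  exact ⟨⟨lam0, hSGtoD lam0 hSG0⟩,
    fun lam => ⟨fun h => hDtoSG lam h, hSGtoD lam⟩,
    fun lam hlam => hbound lam (hDtoSG lam hlam)⟩
end

section
/- Under assumptions (A1)-(A3), the parametrized value function V is Lipschitz continuous on the ball B_{ε/2}(0) with Lipschitz constant 4M/ε (with respect to the supremum norm). -/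
open MeasureTheory ProbabilityTheory Set

lemma mix_integral {Ω : Type*} [MeasurableSpace Ω] (P Q : Measure Ω) (f : Ω → ℝ)
    (hP : Integrable f P) (hQ : Integrable f Q) (θ : ℝ) (h0 : 0 ≤ θ) (h1 : θ ≤ 1) :
    ∫ ω, f ω ∂((ENNReal.ofReal θ) • P + (ENNReal.ofReal (1 - θ)) • Q)
      = θ * ∫ ω, f ω ∂P + (1 - θ) * ∫ ω, f ω ∂Q := by
  rw [integral_add_measure (hP.smul_measure ENNReal.ofReal_ne_top)
      (hQ.smul_measure ENNReal.ofReal_ne_top),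
    integral_smul_measure, integral_smul_measure,
    ENNReal.toReal_ofReal h0, ENNReal.toReal_ofReal (by linarith)]
  simp only [smul_eq_mul]

/-- under (A1)-(A3) the parametrized value function `V` is Lipschitz
continuous with constant `4M/ε` on the closed sup-norm ball `B_{ε/2}(0)`. -/
theorem value_function_lipschitz
    {Ω : Type*} [MeasurableSpace Ω] (m l : ℕ)
    (Pc : Set (Measure Ω))
    (hprob : ∀ P ∈ Pc, IsProbabilityMeasure P)
    (hconv : ∀ P ∈ Pc, ∀ Q ∈ Pc, ∀ θ : ℝ, 0 ≤ θ → θ ≤ 1 →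
      (ENNReal.ofReal θ) • P + (ENNReal.ofReal (1 - θ)) • Q ∈ Pc)
    (ξ : Ω → ℝ) (ζ : Fin (m + l) → Ω → ℝ)
    (hξ : ∀ P ∈ Pc, Integrable ξ P)
    (hζ : ∀ P ∈ Pc, ∀ i, Integrable (ζ i) P)
    (M : ℝ) (hM : ∀ P ∈ Pc, |∫ ω, ξ ω ∂P| ≤ M)
    (ε : ℝ) (hε : 0 < ε)
    (hqual : ∀ z : Fin (m + l) → ℝ, ‖z‖ ≤ ε → ∃ P ∈ Pc, ∀ i : Fin (m + l),
        ((i : ℕ) < m → (∫ ω, ζ i ω ∂P) + z i = 0) ∧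
        (m ≤ (i : ℕ) → (∫ ω, ζ i ω ∂P) + z i ≤ 0))
    (V : (Fin (m + l) → ℝ) → EReal)
    (hV : ∀ z, V z = sInf ((fun P => ((∫ ω, ξ ω ∂P : ℝ) : EReal)) ''
      {P | P ∈ Pc ∧ ∀ i : Fin (m + l),
        ((i : ℕ) < m → (∫ ω, ζ i ω ∂P) + z i = 0) ∧
        (m ≤ (i : ℕ) → (∫ ω, ζ i ω ∂P) + z i ≤ 0)})) :
    ∀ z₁ z₂ : Fin (m + l) → ℝ, ‖z₁‖ ≤ ε / 2 → ‖z₂‖ ≤ ε / 2 →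
      V z₂ ≤ V z₁ + ((4 * M / ε * ‖z₂ - z₁‖ : ℝ) : EReal) := by
  intro z₁ z₂ h1 h2
  set δ : ℝ := ‖z₂ - z₁‖ with hδdef
  have hδ0 : 0 ≤ δ := norm_nonneg _
  -- M ≥ 0
  obtain ⟨P₀, hP₀, hP₀f⟩ := hqual z₁ (by linarith)
  have hM0 : 0 ≤ M := le_trans (abs_nonneg _) (hM P₀ hP₀)
  -- feasibility implies V ≤ integral
  have hVle : ∀ z, ∀ P ∈ Pc, (∀ i : Fin (m + l),
      ((i : ℕ) < m → (∫ ω, ζ i ω ∂P) + z i = 0) ∧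
      (m ≤ (i : ℕ) → (∫ ω, ζ i ω ∂P) + z i ≤ 0)) →
      V z ≤ ((∫ ω, ξ ω ∂P : ℝ) : EReal) := by
    intro z P hP hf
    rw [hV z]
    exact sInf_le ⟨P, ⟨hP, hf⟩, rfl⟩
  -- V z₁ ≥ -M
  have hVlb : ((-M : ℝ) : EReal) ≤ V z₁ := by
    rw [hV z₁]
    apply le_sInf
    rintro x ⟨P, ⟨hP, -⟩, rfl⟩
    exact EReal.coe_le_coe_iff.2 (neg_le_of_abs_le (hM P hP))
  rcases eq_or_lt_of_le hδ0 with hδz | hδpos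
  · -- z₁ = z₂
    have : z₂ = z₁ := by
      have := norm_eq_zero.mp hδz.symm
      have : z₂ - z₁ = 0 := this
      linear_combination (norm := abel) this
    rw [this, ← hδz.symm.symm]
    simp only [← hδz, mul_zero, EReal.coe_zero, add_zero, le_refl]
  · rcases le_or_gt (ε / 2) δ with hbig | hsmall
    · -- big case: V z₂ ≤ M ≤ -M + c ≤ V z₁ + c
      obtain ⟨P₂, hP₂, hP₂f⟩ := hqual z₂ (by linarith)
      have h1' : V z₂ ≤ ((M : ℝ) : EReal) :=
        le_trans (hVle z₂ P₂ hP₂ hP₂f)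
          (EReal.coe_le_coe_iff.2 (le_of_abs_le (hM P₂ hP₂)))
      have hc : (M : ℝ) ≤ -M + 4 * M / ε * δ := by
        have : 2 * M ≤ 4 * M / ε * δ := by
          rw [div_mul_eq_mul_div, le_div_iff₀ hε]
          nlinarith
        linarith
      calc V z₂ ≤ ((M : ℝ) : EReal) := h1'
        _ ≤ ((-M + 4 * M / ε * δ : ℝ) : EReal) := EReal.coe_le_coe_iff.2 hc
        _ = ((-M : ℝ) : EReal) + ((4 * M / ε * δ : ℝ) : EReal) := by
            rw [← EReal.coe_add]
        _ ≤ V z₁ + ((4 * M / ε * δ : ℝ) : EReal) := by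
            exact add_le_add hVlb le_rfl
    · -- small case
      set θ : ℝ := 2 * δ / ε with hθdef
      have hθ0 : 0 < θ := by positivity
      have hθ1 : θ < 1 := by rw [hθdef, div_lt_one hε]; linarith
      set z' : Fin (m + l) → ℝ := z₁ + θ⁻¹ • (z₂ - z₁) with hz'def
      have hz'norm : ‖z'‖ ≤ ε := by
        have : ‖θ⁻¹ • (z₂ - z₁)‖ = θ⁻¹ * δ := by
          rw [norm_smul, Real.norm_eq_abs, abs_inv, abs_of_pos hθ0]
        have hinv : θ⁻¹ * δ = ε / 2 := by
          rw [hθdef]; field_simp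
        calc ‖z'‖ ≤ ‖z₁‖ + ‖θ⁻¹ • (z₂ - z₁)‖ := norm_add_le _ _
          _ = ‖z₁‖ + θ⁻¹ * δ := by rw [this]
          _ ≤ ε / 2 + ε / 2 := by rw [hinv]; linarith
          _ = ε := by ring
      obtain ⟨P', hP', hP'f⟩ := hqual z' hz'norm
      -- show V z₂ - c ≤ sInf = V z₁
      rw [← EReal.sub_le_iff_le_add (Or.inl (EReal.coe_ne_bot _))
          (Or.inl (EReal.coe_ne_top _)), hV z₁]
      apply le_sInf
      rintro x ⟨P, ⟨hP, hPf⟩, rfl⟩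
      rw [EReal.sub_le_iff_le_add (Or.inl (EReal.coe_ne_bot _))
          (Or.inl (EReal.coe_ne_top _))]
      set Q : Measure Ω := (ENNReal.ofReal θ) • P' + (ENNReal.ofReal (1 - θ)) • P with hQdef
      have hQc : Q ∈ Pc := hconv P' hP' P hP θ hθ0.le hθ1.le
      have hmixξ := mix_integral P' P ξ (hξ P' hP') (hξ P hP) θ hθ0.le hθ1.le
      have hmixζ : ∀ i, ∫ ω, ζ i ω ∂Q
          = θ * ∫ ω, ζ i ω ∂P' + (1 - θ) * ∫ ω, ζ i ω ∂P :=
        fun i => mix_integral P' P (ζ i) (hζ P' hP' i) (hζ P hP i) θ hθ0.le hθ1.le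
      have hcomb : ∀ i : Fin (m + l), (∫ ω, ζ i ω ∂Q) + z₂ i
          = θ * ((∫ ω, ζ i ω ∂P') + z' i) + (1 - θ) * ((∫ ω, ζ i ω ∂P) + z₁ i) := by
        intro i
        have hz2 : z₂ i = θ * z' i + (1 - θ) * z₁ i := by
          have : z' i = z₁ i + θ⁻¹ * (z₂ i - z₁ i) := rfl
          rw [this, mul_add, ← mul_assoc, mul_inv_cancel₀ hθ0.ne']; ring
        rw [hmixζ i, hz2]; ring
      have hQf : ∀ i : Fin (m + l),
          ((i : ℕ) < m → (∫ ω, ζ i ω ∂Q) + z₂ i = 0) ∧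
          (m ≤ (i : ℕ) → (∫ ω, ζ i ω ∂Q) + z₂ i ≤ 0) := by
        intro i
        constructor
        · intro him
          rw [hcomb i, (hP'f i).1 him, (hPf i).1 him]; ring
        · intro him
          rw [hcomb i]
          have h1 := (hP'f i).2 him
          have h2 := (hPf i).2 him
          nlinarith
      have hint : (∫ ω, ξ ω ∂Q) ≤ (∫ ω, ξ ω ∂P) + 4 * M / ε * δ := by
        rw [hmixξ]
        have hA : ∫ ω, ξ ω ∂P' ≤ M := le_of_abs_le (hM P' hP')
        have hB : -M ≤ ∫ ω, ξ ω ∂P := neg_le_of_abs_le (hM P hP)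
        have : θ * (2 * M) ≤ 4 * M / ε * δ := le_of_eq (by rw [hθdef]; field_simp; ring)
        nlinarith
      calc V z₂ ≤ ((∫ ω, ξ ω ∂Q : ℝ) : EReal) := hVle z₂ Q hQc hQf
        _ ≤ (((∫ ω, ξ ω ∂P) + 4 * M / ε * δ : ℝ) : EReal) := EReal.coe_le_coe_iff.2 hint
        _ = ((∫ ω, ξ ω ∂P : ℝ) : EReal) + ((4 * M / ε * δ : ℝ) : EReal) := by
            rw [← EReal.coe_add]
end
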